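/- Let F be an infinite field. There are infinitely many isomorphism classes of 3-dimensional nilpotent non-unital associative F-algebras. In particular, the algebras A_{3,4}^α with basis a, b, c and nonzero products a² = αc, ab = c, b² = c, for α ranging over F, are pairwise non-isomorphic. -/

import Mathlib

/-- A nilpotent (non-unital) associative algebra structure on the `F`-vector space
`Fin n → F`: a bilinear, associative multiplication such that for some `m ≥ 1` every
product of `m` elements is zero. -/
structure NilpAlgStr (F : Type*) [Field F] (n : ℕ) where
  mul : (Fin n → F) →ₗ[F] (Fin n → F) →ₗ[F] (Fin n → F)
  assoc : ∀ x y z, mul (mul x y) z = mul x (mul y z)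
  nilpotent : ∃ m : ℕ, 0 < m ∧ ∀ (x : Fin n → F) (l : List (Fin n → F)),
      l.length + 1 = m → l.foldl (fun p q => mul p q) x = 0

/-- Two algebra structures are isomorphic when some linear automorphism intertwines
the multiplications. -/
def NilpAlgStr.Iso {F : Type*} [Field F] {n : ℕ} (P Q : NilpAlgStr F n) : Prop :=
  ∃ e : (Fin n → F) ≃ₗ[F] (Fin n → F), ∀ x y, e (P.mul x y) = Q.mul (e x) (e y)

/-- `A_{3,4}^α` : `a² = αc`, `ab = c`, `b² = c`, all other products of basis
elements zero. -/
def IsA34Basis {F A : Type*} [Field F] [NonUnitalRing A] [Module F A]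
    (α : F) (v : Module.Basis (Fin 3) F A) : Prop :=
  v 0 * v 0 = α • v 2 ∧ v 0 * v 1 = v 2 ∧ v 1 * v 1 = v 2 ∧
  v 1 * v 0 = 0 ∧ v 0 * v 2 = 0 ∧ v 2 * v 0 = 0 ∧
  v 1 * v 2 = 0 ∧ v 2 * v 1 = 0 ∧ v 2 * v 2 = 0

/- ===== auxiliary lemmas ===== -/


lemma keylem {F : Type*} [Field F] (α β p q s t L : F) (hL : L ≠ 0)
    (h1 : β*(s*p) + s*q + t*q = 0)
    (h2 : β*(p*s) + p*t + q*t = L)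
    (h3 : β*(s*s) + s*t + t*t = L)
    (h4 : β*(p*p) + p*q + q*q = α*L) : α = β := by
  have hd : p*t - q*s = L := by linear_combination h2 - h1
  have key : α*(L*L) = β*(L*L) := by
    linear_combination (-L)*h4 - (β*(p*p)+p*q+q*q)*h3 + (β*(p*s)+p*t+q*t)*h1 + β*(p*t-q*s+L)*hd
  exact mul_right_cancel₀ (mul_ne_zero hL hL) key

lemma iso_equiv {F : Type*} [Field F] {n : ℕ} :
    Equivalence (@NilpAlgStr.Iso F _ n) := by
  constructor
  · intro P
    exact ⟨LinearEquiv.refl F _, fun x y => rfl⟩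
  · rintro P Q ⟨e, he⟩
    refine ⟨e.symm, fun x y => e.injective ?_⟩
    rw [he, e.apply_symm_apply, e.apply_symm_apply, e.apply_symm_apply]
  · rintro P Q R ⟨e, he⟩ ⟨f, hf⟩
    exact ⟨e.trans f, fun x y => by
      simp only [LinearEquiv.trans_apply, he, hf]⟩

noncomputable def stdMul (F : Type*) [Field F] (γ : F) :
    (Fin 3 → F) →ₗ[F] (Fin 3 → F) →ₗ[F] (Fin 3 → F) :=
  LinearMap.mk₂ F
    (fun x y => (γ * (x 0 * y 0) + x 0 * y 1 + x 1 * y 1) • (![0,0,1] : Fin 3 → F))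
    (by intro x x' y; rw [← add_smul]; simp only [Pi.add_apply]; ring_nf)
    (by intro a x y; rw [smul_smul]; simp only [Pi.smul_apply, smul_eq_mul]; ring_nf)
    (by intro x y y'; rw [← add_smul]; simp only [Pi.add_apply]; ring_nf)
    (by intro a x y; rw [smul_smul]; simp only [Pi.smul_apply, smul_eq_mul]; ring_nf)

lemma stdMul_apply {F : Type*} [Field F] (γ : F) (x y : Fin 3 → F) :
    stdMul F γ x y = (γ * (x 0 * y 0) + x 0 * y 1 + x 1 * y 1) • (![0,0,1] : Fin 3 → F) :=
  rfl

lemma stdMul_smul_left {F : Type*} [Field F] (γ a : F) (z : Fin 3 → F) :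
    stdMul F γ (a • (![0,0,1] : Fin 3 → F)) z = 0 := by
  rw [stdMul_apply]
  simp [Pi.smul_apply, smul_eq_mul]

lemma stdMul_smul_right {F : Type*} [Field F] (γ a : F) (z : Fin 3 → F) :
    stdMul F γ z (a • (![0,0,1] : Fin 3 → F)) = 0 := by
  rw [stdMul_apply]
  simp [Pi.smul_apply, smul_eq_mul]

noncomputable def stdAlg (F : Type*) [Field F] (γ : F) : NilpAlgStr F 3 where
  mul := stdMul F γ
  assoc := by
    intro x y z
    rw [stdMul_apply γ x y, stdMul_apply γ y z, stdMul_smul_left, stdMul_smul_right]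
  nilpotent := by
    refine ⟨3, by norm_num, ?_⟩
    intro x l hl
    have h2 : l.length = 2 := by omega
    obtain ⟨a, b, rfl⟩ := List.length_eq_two.mp h2
    show stdMul F γ (stdMul F γ x a) b = 0
    rw [stdMul_apply γ x a, stdMul_smul_left]

lemma stdAlg_iso_inj {F : Type*} [Field F] {α β : F}
    (h : (stdAlg F α).Iso (stdAlg F β)) : α = β := by
  obtain ⟨e, he⟩ := h
  set c : Fin 3 → F := ![0,0,1] with hc
  have hcne : c ≠ 0 := by
    intro h
    have := congrFun h 2
    simp [hc] at this
  set u0 := e ![1,0,0] with hu0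
  set u1 := e ![0,1,0] with hu1
  set p := u0 0
  set q := u0 1
  set s := u1 0
  set t := u1 1
  set L := β*(p*s) + p*t + q*t with hL
  have heval : ∀ a : F, (a • c) 2 = a := by
    intro a; simp [hc]
  have h01 : (stdAlg F α).mul ![1,0,0] ![0,1,0] = c := by
    show stdMul F α _ _ = c
    rw [stdMul_apply]
    norm_num
    exact hc.symm
  have h10 : (stdAlg F α).mul ![0,1,0] ![1,0,0] = 0 := by
    show stdMul F α _ _ = 0
    rw [stdMul_apply]
    norm_num
  have h11 : (stdAlg F α).mul ![0,1,0] ![0,1,0] = c := by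
    show stdMul F α _ _ = c
    rw [stdMul_apply]
    norm_num
    exact hc.symm
  have h00 : (stdAlg F α).mul ![1,0,0] ![1,0,0] = α • c := by
    show stdMul F α _ _ = α • c
    rw [stdMul_apply]
    funext i
    fin_cases i <;> simp [hc]
  have hec : e c = L • c := by
    have h := he ![1,0,0] ![0,1,0]
    rw [h01, ← hu0, ← hu1] at h
    rw [h]
    show stdMul F β u0 u1 = L • c
    rw [stdMul_apply, hL]
  have hLne : L ≠ 0 := by
    intro h
    rw [h, zero_smul] at hec
    exact hcne (e.map_eq_zero_iff.mp hec)
  refine keylem α β p q s t L hLne ?_ rfl ?_ ?_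
  · have := he ![0,1,0] ![1,0,0]
    rw [h10, map_zero, ← hu0, ← hu1] at this
    have h2 := congrFun this.symm 2
    have : (stdAlg F β).mul u1 u0 = (β * (s*p) + s*q + t*q) • c := by
      show stdMul F β _ _ = _
      rw [stdMul_apply]
    rw [this, heval] at h2
    exact h2
  · have := he ![0,1,0] ![0,1,0]
    rw [h11, hec, ← hu1] at this
    have h2 := congrFun this 2
    have h3 : (stdAlg F β).mul u1 u1 = (β * (s*s) + s*t + t*t) • c := by
      show stdMul F β _ _ = _
      rw [stdMul_apply]
    rw [h3, heval, heval] at h2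
    exact h2.symm
  · have := he ![1,0,0] ![1,0,0]
    rw [h00, map_smul, hec, smul_smul, ← hu0] at this
    have h2 := congrFun this 2
    have h3 : (stdAlg F β).mul u0 u0 = (β * (p*p) + p*q + q*q) • c := by
      show stdMul F β _ _ = _
      rw [stdMul_apply]
    rw [h3, heval, heval] at h2
    exact h2.symm

lemma infinite_quot (F : Type) [Field F] [Infinite F] :
    Infinite (Quot (@NilpAlgStr.Iso F _ 3)) := by
  apply Infinite.of_injective (fun γ : F => Quot.mk _ (stdAlg F γ))
  intro a b hab
  exact stdAlg_iso_inj ((iso_equiv.eqvGen_iff).mp (Quot.eq.mp hab))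

lemma part2lem {F A B : Type*} [Field F] [NonUnitalRing A] [Module F A]
    [SMulCommClass F A A] [IsScalarTower F A A] [NonUnitalRing B] [Module F B]
    [SMulCommClass F B B] [IsScalarTower F B B] (α β : F)
    (v : Module.Basis (Fin 3) F A) (w : Module.Basis (Fin 3) F B)
    (hv : IsA34Basis α v) (hw : IsA34Basis β w)
    (e : A ≃ₗ[F] B) (he : ∀ x y : A, e (x * y) = e x * e y) : α = β := by
  obtain ⟨hv1, hv2, hv3, hv4, hv5, hv6, hv7, hv8, hv9⟩ := hv
  obtain ⟨hw1, hw2, hw3, hw4, hw5, hw6, hw7, hw8, hw9⟩ := hw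
  have hmul : ∀ a b c d f g : F,
      (a • w 0 + b • w 1 + c • w 2) * (d • w 0 + f • w 1 + g • w 2)
        = (β*(a*d) + a*f + b*f) • w 2 := by
    intro a b c d f g
    simp only [add_mul, mul_add, smul_mul_smul_comm, hw1, hw2, hw3, hw4, hw5, hw6,
      hw7, hw8, hw9, smul_zero, add_zero, zero_add, smul_smul]
    module
  have hexp : ∀ x : B, x = w.repr x 0 • w 0 + w.repr x 1 • w 1 + w.repr x 2 • w 2 := by
    intro x
    have := w.sum_repr x
    rw [Fin.sum_univ_three] at this
    exact this.symm
  set p := w.repr (e (v 0)) 0 with hp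
  set q := w.repr (e (v 0)) 1 with hq
  set s := w.repr (e (v 1)) 0 with hs
  set t := w.repr (e (v 1)) 1 with ht
  have hcoef : ∀ a b : F, a • w 2 = b • w 2 → a = b := by
    intro a b h
    have := congrArg (fun z => w.repr z 2) h
    simpa using this
  set L := β*(p*s) + p*t + q*t with hL
  have hx := hexp (e (v 0))
  have hy := hexp (e (v 1))
  have h2 : e (v 2) = L • w 2 := by
    rw [← hv2, he, hx, hy, hmul]
  have hLne : L ≠ 0 := by
    intro h
    rw [h, zero_smul] at h2
    exact v.ne_zero 2 (e.map_eq_zero_iff.mp h2)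
  have h1 : β*(s*p) + s*q + t*q = 0 := by
    apply hcoef
    rw [zero_smul]
    calc (β*(s*p) + s*q + t*q) • w 2 = e (v 1) * e (v 0) := by rw [hx, hy, hmul]
    _ = e (v 1 * v 0) := (he _ _).symm
    _ = 0 := by rw [hv4, map_zero]
  have h3 : β*(s*s) + s*t + t*t = L := by
    apply hcoef
    calc (β*(s*s) + s*t + t*t) • w 2 = e (v 1) * e (v 1) := by rw [hy, hmul]
    _ = e (v 1 * v 1) := (he _ _).symm
    _ = L • w 2 := by rw [hv3, h2]
  have h4 : β*(p*p) + p*q + q*q = α*L := by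
    apply hcoef
    calc (β*(p*p) + p*q + q*q) • w 2 = e (v 0) * e (v 0) := by rw [hx, hmul]
    _ = e (v 0 * v 0) := (he _ _).symm
    _ = (α*L) • w 2 := by rw [hv1, map_smul, h2, smul_smul]
  exact keylem α β p q s t L hLne h1 rfl h3 h4


/-- Over an infinite field there are infinitely many isomorphism classes of
3-dimensional nilpotent non-unital associative algebras; in particular the algebras
`A_{3,4}^α`, `α ∈ F`, are pairwise non-isomorphic. -/
theorem stmt13 (F : Type) [Field F] [Infinite F] :
    Infinite (Quot (@NilpAlgStr.Iso F _ 3)) ∧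
    ∀ (A B : Type) [NonUnitalRing A] [Module F A] [SMulCommClass F A A]
      [IsScalarTower F A A] [NonUnitalRing B] [Module F B] [SMulCommClass F B B]
      [IsScalarTower F B B] (α β : F)
      (v : Module.Basis (Fin 3) F A) (w : Module.Basis (Fin 3) F B),
      IsA34Basis α v → IsA34Basis β w → α ≠ β →
      ¬ ∃ e : A ≃ₗ[F] B, ∀ x y : A, e (x * y) = e x * e y := by
  constructor
  · exact infinite_quot F
  · intro A B _ _ _ _ _ _ _ _ α β v w hv hw hab h
    obtain ⟨e, he⟩ := h
    exact hab (part2lem α β v w hv hw e he)
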